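/- arXiv:0910.4889 — 2 statements merged into one kernel-verified Lean document; each statement's English description precedes it below -/
import Mathlib

section
/- Every track has path-width at most 2. -/
open SimpleGraph

universe u v

/-- A path-decomposition of a simple graph: a finite sequence of bags covering all vertices
and edges, such that bags containing a fixed vertex occur consecutively. -/
structure PathDecomp {V : Type u} (G : SimpleGraph V) where
  n : ℕ
  bag : Fin n → Finset V
  mem_bag : ∀ v : V, ∃ i, v ∈ bag i
  edge_bag : ∀ ⦃u w : V⦄, G.Adj u w → ∃ i, u ∈ bag i ∧ w ∈ bag i
  interp : ∀ i j k : Fin n, i ≤ j → j ≤ k → ∀ v : V, v ∈ bag i → v ∈ bag k → v ∈ bag j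

/-- The width of a path-decomposition: (maximal bag size) - 1. -/
def PathDecomp.width {V : Type u} {G : SimpleGraph V} (D : PathDecomp G) : ℕ :=
  (Finset.univ.sup fun i => (D.bag i).card) - 1

/-- The path-width of a graph: the minimum width of a path-decomposition. -/
noncomputable def pathWidth {V : Type u} (G : SimpleGraph V) : ℕ :=
  sInf {w | ∃ D : PathDecomp G, D.width = w}

/-- `IsMinor G H` : `H` is a minor of `G`, witnessed by a family of pairwise disjoint nonempty
connected branch sets in `G` indexed by the vertices of `H`. -/
def IsMinor {V : Type u} {W : Type v} (G : SimpleGraph V) (H : SimpleGraph W) : Prop :=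
  ∃ B : W → Set V,
    (∀ w, (B w).Nonempty) ∧
    (Pairwise fun w w' => Disjoint (B w) (B w')) ∧
    (∀ w, (G.induce (B w)).Connected) ∧
    (∀ ⦃w w'⦄, H.Adj w w' → ∃ u ∈ B w, ∃ u' ∈ B w', G.Adj u u')

/-- A graph is 2-connected if it has at least 3 vertices and deleting any vertex leaves it
connected. -/
def TwoConnected {V : Type u} (G : SimpleGraph V) : Prop :=
  3 ≤ Nat.card V ∧ ∀ v : V, (G.induce ({v}ᶜ : Set V)).Connected

/-- A graph is 2-edge-connected if it is connected, has at least 2 vertices, and deleting any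
edge leaves it connected. -/
def TwoEdgeConnected {V : Type u} (G : SimpleGraph V) : Prop :=
  G.Connected ∧ 2 ≤ Nat.card V ∧ ∀ e ∈ G.edgeSet, (G.deleteEdges {e}).Connected

/-- A track representation of a graph `G`: two disjoint paths `p 0, …, p (k-1)` and
`q 0, …, q (l-1)`, short chords (edges `p i — q j`) and long chords (paths `p i — m — q j`
with middle vertex `m ∈ M`, recorded by `ends m = (i, j)`), the chords pairwise non-crossing,
with a chord joining the first vertices of the two paths and a chord joining the last ones;
the vertices of `G` are exactly those of the two paths plus the middle vertices, and the
edges of `G` are exactly the path edges and the chord edges. -/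
structure TrackRep {V : Type u} (G : SimpleGraph V) where
  k : ℕ
  l : ℕ
  kpos : 0 < k
  lpos : 0 < l
  p : Fin k → V
  q : Fin l → V
  short : Set (Fin k × Fin l)
  M : Set V
  ends : V → Fin k × Fin l
  M_fin : M.Finite
  p_inj : Function.Injective p
  q_inj : Function.Injective q
  p_ne_q : ∀ i j, p i ≠ q j
  M_ne_p : ∀ ⦃m⦄, m ∈ M → ∀ i, m ≠ p i
  M_ne_q : ∀ ⦃m⦄, m ∈ M → ∀ j, m ≠ q j
  vert_cover : ∀ x : V, (∃ i, x = p i) ∨ (∃ j, x = q j) ∨ x ∈ M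
  noncross : ∀ c ∈ short ∪ ends '' M, ∀ c' ∈ short ∪ ends '' M,
      0 ≤ (((c.1 : ℕ) : ℤ) - ((c'.1 : ℕ) : ℤ)) * (((c.2 : ℕ) : ℤ) - ((c'.2 : ℕ) : ℤ))
  first_chord : (⟨0, kpos⟩, ⟨0, lpos⟩) ∈ short ∪ ends '' M
  last_chord : (⟨k - 1, Nat.sub_lt kpos Nat.one_pos⟩, ⟨l - 1, Nat.sub_lt lpos Nat.one_pos⟩)
      ∈ short ∪ ends '' M
  adj_iff : ∀ u w : V, G.Adj u w ↔
      (∃ i j : Fin k, ((i : ℕ) + 1 = (j : ℕ) ∨ (j : ℕ) + 1 = (i : ℕ)) ∧ u = p i ∧ w = p j) ∨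
      (∃ i j : Fin l, ((i : ℕ) + 1 = (j : ℕ) ∨ (j : ℕ) + 1 = (i : ℕ)) ∧ u = q i ∧ w = q j) ∨
      (∃ c ∈ short, (u = p c.1 ∧ w = q c.2) ∨ (u = q c.2 ∧ w = p c.1)) ∨
      (∃ m ∈ M, (u = m ∧ (w = p (ends m).1 ∨ w = q (ends m).2)) ∨
                (w = m ∧ (u = p (ends m).1 ∨ u = q (ends m).2)))

/-- A graph is a track if it admits a track representation. -/
def IsTrack {V : Type u} (G : SimpleGraph V) : Prop := Nonempty (TrackRep G)

/-- A graph is a partial track if it is (isomorphic to) a subgraph of a track. -/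
def IsPartialTrack {V : Type u} (G : SimpleGraph V) : Prop :=
  ∃ (W : Type) (T : SimpleGraph W) (f : V → W),
    IsTrack T ∧ Function.Injective f ∧ ∀ ⦃a b : V⦄, G.Adj a b → T.Adj (f a) (f b)

/-- `r` can play the role of a corner of `G`: some track representation of `G` has `r`
as one of the four corners `p₁, p_k, q₁, q_ℓ`. -/
def CanBeCorner {V : Type u} (G : SimpleGraph V) (r : V) : Prop :=
  ∃ T : TrackRep G,
    r = T.p ⟨0, T.kpos⟩ ∨ r = T.p ⟨T.k - 1, Nat.sub_lt T.kpos Nat.one_pos⟩ ∨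
    r = T.q ⟨0, T.lpos⟩ ∨ r = T.q ⟨T.l - 1, Nat.sub_lt T.lpos Nat.one_pos⟩

/-- `r` and `r'` can play the role of opposite corners of `G`. -/
def CanBeOppositeCorners {V : Type u} (G : SimpleGraph V) (r r' : V) : Prop :=
  ∃ T : TrackRep G,
    (r = T.p ⟨0, T.kpos⟩ ∨ r = T.q ⟨0, T.lpos⟩) ∧
    (r' = T.p ⟨T.k - 1, Nat.sub_lt T.kpos Nat.one_pos⟩ ∨
     r' = T.q ⟨T.l - 1, Nat.sub_lt T.lpos Nat.one_pos⟩)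

/-- `r` can play the role of a degenerate side of `G`: some track representation has `k = 1`
and `p₁ = r`. -/
def CanBeDegenerateSide {V : Type u} (G : SimpleGraph V) (r : V) : Prop :=
  ∃ T : TrackRep G, T.k = 1 ∧ r = T.p ⟨0, T.kpos⟩

/-- Two edges are equal or lie on a common cycle. -/
def OnCommonCycle {V : Type u} (G : SimpleGraph V) (e f : Sym2 V) : Prop :=
  e = f ∨ ∃ (x : V) (c : G.Walk x x), c.IsCycle ∧ e ∈ c.edges ∧ f ∈ c.edges

/-- The subgraph of `G` spanned by a set `F` of edges. -/
def edgeSpan {V : Type u} (G : SimpleGraph V) (F : Set (Sym2 V)) : G.Subgraph where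
  verts := {a | ∃ b, G.Adj a b ∧ s(a, b) ∈ F}
  Adj a b := G.Adj a b ∧ s(a, b) ∈ F
  adj_sub h := h.1
  edge_vert h := ⟨_, h.1, h.2⟩
  symm := ⟨fun a b h => ⟨h.1.symm, by rw [Sym2.eq_swap]; exact h.2⟩⟩

/-- `B` is a block of `G`: the subgraph spanned by an equivalence class of edges under the
relation "being equal or lying on a common cycle". -/
def IsBlock {V : Type u} (G : SimpleGraph V) (B : G.Subgraph) : Prop :=
  ∃ e ∈ G.edgeSet, B = edgeSpan G {f | OnCommonCycle G e f}

/-- A cut vertex: a vertex whose removal disconnects the (connected) graph. -/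
def IsCutVertex {V : Type u} (G : SimpleGraph V) (v : V) : Prop :=
  G.Connected ∧ ¬ (G.induce ({v}ᶜ : Set V)).Connected

/-- The subgraph `B` of `G` (as an abstract graph) is a track. -/
def SubIsTrack {V : Type u} {G : SimpleGraph V} (B : G.Subgraph) : Prop :=
  IsTrack B.coe

/-- The vertex `r` can play the role of a corner of the subgraph `B`. -/
def SubCanBeCorner {V : Type u} {G : SimpleGraph V} (B : G.Subgraph) (r : V) : Prop :=
  ∃ h : r ∈ B.verts, CanBeCorner B.coe ⟨r, h⟩

/-- The vertices `r, r'` can play the role of opposite corners of the subgraph `B`. -/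
def SubCanBeOppositeCorners {V : Type u} {G : SimpleGraph V} (B : G.Subgraph)
    (r r' : V) : Prop :=
  ∃ (h : r ∈ B.verts) (h' : r' ∈ B.verts), CanBeOppositeCorners B.coe ⟨r, h⟩ ⟨r', h'⟩

/-- The vertex `r` can play the role of a degenerate side of the subgraph `B`. -/
def SubCanBeDegenerateSide {V : Type u} {G : SimpleGraph V} (B : G.Subgraph) (r : V) : Prop :=
  ∃ h : r ∈ B.verts, CanBeDegenerateSide B.coe ⟨r, h⟩

/-- `C` is a longest cycle of `G`. -/
def IsLongestCycle {V : Type u} (G : SimpleGraph V) {x : V} (C : G.Walk x x) : Prop :=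
  C.IsCycle ∧ ∀ (y : V) (D : G.Walk y y), D.IsCycle → D.length ≤ C.length

/-- `N` is (the vertex set of) a connected component of `G − S`. -/
def IsCompOf {V : Type u} (G : SimpleGraph V) (S N : Set V) : Prop :=
  N.Nonempty ∧ N ⊆ Sᶜ ∧ (G.induce N).Connected ∧
    ∀ a ∈ N, ∀ b, b ∉ S → G.Adj a b → b ∈ N

/-- The subgraph consisting of all edges of `G` incident to a vertex of `N`
(together with their endpoints). -/
def bridgeFromComp {V : Type u} (G : SimpleGraph V) (N : Set V) : G.Subgraph where
  verts := {a | ∃ b, G.Adj a b ∧ (a ∈ N ∨ b ∈ N)}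
  Adj a b := G.Adj a b ∧ (a ∈ N ∨ b ∈ N)
  adj_sub h := h.1
  edge_vert h := ⟨_, h.1, h.2⟩
  symm := ⟨fun a b h => ⟨h.1.symm, h.2.symm⟩⟩

/-- `B` is a bridge of the cycle `C` in `G`: either the subgraph of all edges incident to a
component of `G − V(C)`, or a single edge of `G` joining two vertices of `C` and not lying
on `C`. -/
def IsBridgeOf {V : Type u} (G : SimpleGraph V) {x : V} (C : G.Walk x x)
    (B : G.Subgraph) : Prop :=
  (∃ N : Set V, IsCompOf G {a | a ∈ C.support} N ∧ B = bridgeFromComp G N) ∨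
  (∃ (a b : V) (h : G.Adj a b), a ∈ C.support ∧ b ∈ C.support ∧ s(a, b) ∉ C.edges ∧
      B = G.subgraphOfAdj h)

/-- The legs of a bridge `B` of a cycle `C`: the vertices of `B` lying on `C`. -/
def legs {V : Type u} {G : SimpleGraph V} {x : V} (C : G.Walk x x) (B : G.Subgraph) : Set V :=
  {a | a ∈ B.verts ∧ a ∈ C.support}

/-- `z` lies strictly between `a` and `b` in the linear order given by the list `L`. -/
def posBetween {V : Type u} [DecidableEq V] (L : List V) (a b z : V) : Prop :=
  (L.idxOf a < L.idxOf z ∧ L.idxOf z < L.idxOf b) ∨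
  (L.idxOf b < L.idxOf z ∧ L.idxOf z < L.idxOf a)

/-- The pairs `{a₁, a₂}` and `{b₁, b₂}` are crossing pairs on the cyclic order given by the
list `L`: the pairs are disjoint pairs of distinct vertices and the four vertices alternate
cyclically (equivalently, exactly one of `b₁, b₂` lies strictly between `a₁` and `a₂`). -/
def CrossingPairs {V : Type u} [DecidableEq V] (L : List V) (a₁ a₂ b₁ b₂ : V) : Prop :=
  a₁ ≠ a₂ ∧ b₁ ≠ b₂ ∧ a₁ ≠ b₁ ∧ a₁ ≠ b₂ ∧ a₂ ≠ b₁ ∧ a₂ ≠ b₂ ∧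
    Xor' (posBetween L a₁ a₂ b₁) (posBetween L a₁ a₂ b₂)

/-- Two bridges of a cycle `C` cross: some pair of legs of one and some pair of legs of the
other are crossing pairs along `C`. -/
def BridgesCross {V : Type u} [DecidableEq V] {G : SimpleGraph V} {x : V} (C : G.Walk x x)
    (B₁ B₂ : G.Subgraph) : Prop :=
  ∃ a₁ ∈ legs C B₁, ∃ a₂ ∈ legs C B₁, ∃ b₁ ∈ legs C B₂, ∃ b₂ ∈ legs C B₂,
    CrossingPairs C.support.tail a₁ a₂ b₁ b₂

namespace TrackPW

open Finset

variable {V : Type u} [Fintype V] [DecidableEq V] {G : SimpleGraph V} (T : TrackRep G)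

/-- The set of chords, as a finset of index pairs. -/
noncomputable def Ch : Finset (Fin T.k × Fin T.l) :=
  (T.short ∪ T.ends '' T.M).toFinite.toFinset

lemma mem_Ch {c : Fin T.k × Fin T.l} : c ∈ Ch T ↔ c ∈ T.short ∪ T.ends '' T.M :=
  Set.Finite.mem_toFinset _

/-- The top row of the staircase at column `i`. -/
noncomputable def g (i : ℕ) : ℕ :=
  ((Ch T).filter (fun c => (c.1 : ℕ) ≤ i)).sup (fun c => (c.2 : ℕ))

lemma g_mono {i i' : ℕ} (h : i ≤ i') : g T i ≤ g T i' := by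
  apply Finset.sup_mono
  intro c hc
  simp only [Finset.mem_filter] at hc ⊢
  exact ⟨hc.1, le_trans hc.2 h⟩

lemma g_le_l (i : ℕ) : g T i ≤ T.l - 1 := by
  apply Finset.sup_le
  intro c _
  have := c.2.isLt
  omega

lemma chord_le_g {c : Fin T.k × Fin T.l} (hc : c ∈ Ch T) : (c.2 : ℕ) ≤ g T (c.1 : ℕ) := by
  rw [g]
  have hmem : c ∈ (Ch T).filter (fun c' => (c'.1 : ℕ) ≤ (c.1 : ℕ)) :=
    Finset.mem_filter.mpr ⟨hc, le_refl _⟩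
  exact Finset.le_sup (f := fun c => ((c.2 : ℕ))) hmem

/-- The bottom row of the staircase at column `i`. -/
noncomputable def hrow (i : ℕ) : ℕ := if i = 0 then 0 else g T (i - 1)

lemma hrow_zero : hrow T 0 = 0 := by simp [hrow]

lemma hrow_pos {i : ℕ} (hi : 0 < i) : hrow T i = g T (i - 1) := by
  rw [hrow, if_neg (by omega)]

lemma hrow_le_g (i : ℕ) : hrow T i ≤ g T i := by
  rcases Nat.eq_zero_or_pos i with h | h
  · simp [h, hrow_zero]
  · rw [hrow_pos T h]
    exact g_mono T (by omega)

lemma hrow_le_chord {c : Fin T.k × Fin T.l} (hc : c ∈ Ch T) : hrow T (c.1 : ℕ) ≤ (c.2 : ℕ) := by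
  rcases Nat.eq_zero_or_pos (c.1 : ℕ) with h | h
  · simp [h, hrow_zero]
  · rw [hrow_pos T h]
    apply Finset.sup_le
    intro c' hc'
    simp only [Finset.mem_filter] at hc'
    have hnc := T.noncross c' ((mem_Ch T).mp hc'.1) c ((mem_Ch T).mp hc)
    have h1 : (c'.1 : ℕ) < (c.1 : ℕ) := by omega
    by_contra hlt
    push_neg at hlt
    have ha : (((c'.1 : ℕ) : ℤ) - ((c.1 : ℕ) : ℤ)) ≤ -1 := by
      push_cast; omega
    have hb : (((c'.2 : ℕ) : ℤ) - ((c.2 : ℕ) : ℤ)) ≥ 1 := by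
      push_cast; omega
    nlinarith

lemma first_mem_Ch : ((⟨0, T.kpos⟩ : Fin T.k), (⟨0, T.lpos⟩ : Fin T.l)) ∈ Ch T :=
  (mem_Ch T).mpr T.first_chord

lemma last_mem_Ch :
    ((⟨T.k - 1, Nat.sub_lt T.kpos Nat.one_pos⟩ : Fin T.k),
     (⟨T.l - 1, Nat.sub_lt T.lpos Nat.one_pos⟩ : Fin T.l)) ∈ Ch T :=
  (mem_Ch T).mpr T.last_chord

lemma g_last : g T (T.k - 1) = T.l - 1 := by
  apply le_antisymm (g_le_l T _)
  have := chord_le_g T (last_mem_Ch T)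
  simpa using this

/-- Clamped versions of the path vertex maps. -/
noncomputable def P (i : ℕ) : V :=
  T.p ⟨min i (T.k - 1), lt_of_le_of_lt (min_le_right _ _) (Nat.sub_lt T.kpos Nat.one_pos)⟩

noncomputable def Q (j : ℕ) : V :=
  T.q ⟨min j (T.l - 1), lt_of_le_of_lt (min_le_right _ _) (Nat.sub_lt T.lpos Nat.one_pos)⟩

lemma P_eq {i : ℕ} (hi : i < T.k) : P T i = T.p ⟨i, hi⟩ := by
  have : min i (T.k - 1) = i := by omega
  simp [P, this]

lemma Q_eq {j : ℕ} (hj : j < T.l) : Q T j = T.q ⟨j, hj⟩ := by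
  have : min j (T.l - 1) = j := by omega
  simp [Q, this]

lemma P_eq' (i : Fin T.k) : T.p i = P T (i : ℕ) := by
  rw [P_eq T i.isLt]

lemma Q_eq' (j : Fin T.l) : T.q j = Q T (j : ℕ) := by
  rw [Q_eq T j.isLt]

lemma P_inj {i i' : ℕ} (hi : i < T.k) (hi' : i' < T.k) (h : P T i = P T i') : i = i' := by
  rw [P_eq T hi, P_eq T hi'] at h
  simpa using congrArg Fin.val (T.p_inj h)

lemma Q_inj {j j' : ℕ} (hj : j < T.l) (hj' : j' < T.l) (h : Q T j = Q T j') : j = j' := by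
  rw [Q_eq T hj, Q_eq T hj'] at h
  simpa using congrArg Fin.val (T.q_inj h)

lemma P_ne_Q (i j : ℕ) : P T i ≠ Q T j := T.p_ne_q _ _

/-- Inverse enumeration of vertices, used to index middle vertices. -/
noncomputable def mid (s : ℕ) : V :=
  if hs : s < Fintype.card V then (Fintype.equivFin V).symm ⟨s, hs⟩ else T.p ⟨0, T.kpos⟩

noncomputable def idx (v : V) : ℕ := (Fintype.equivFin V v : ℕ)

lemma idx_lt (v : V) : idx v < Fintype.card V := (Fintype.equivFin V v).isLt

lemma mid_idx (v : V) : mid T (idx v) = v := by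
  simp [mid, idx, idx_lt]

lemma mid_inj {s s' : ℕ} (hs : s < Fintype.card V) (hs' : s' < Fintype.card V)
    (h : mid T s = mid T s') : s = s' := by
  simp only [mid, dif_pos hs, dif_pos hs'] at h
  have := (Fintype.equivFin V).symm.injective h
  simpa using this

/-- Triple constructor for the lexicographic index type. -/
def mk3 (i j s : ℕ) : ℕ ×ₗ ℕ ×ₗ ℕ := toLex (i, toLex (j, s))

lemma mk3_le_mk3 {i j s i' j' s' : ℕ} :
    mk3 i j s ≤ mk3 i' j' s' ↔ i < i' ∨ (i = i' ∧ (j < j' ∨ (j = j' ∧ s ≤ s'))) := by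
  simp [mk3, Prod.Lex.le_iff]

lemma mk3_inj {i j s i' j' s' : ℕ} :
    mk3 i j s = mk3 i' j' s' ↔ i = i' ∧ j = j' ∧ s = s' := by
  constructor
  · intro h
    have := toLex.injective h
    rw [Prod.ext_iff] at this
    have h2 := toLex.injective this.2
    rw [Prod.ext_iff] at h2
    exact ⟨this.1, h2.1, h2.2⟩
  · rintro ⟨rfl, rfl, rfl⟩; rfl

/-- The bag at index `(i, j, s)`. -/
noncomputable def bag3 (i j s : ℕ) : Finset V :=
  {P T i, Q T j} ∪
    (if s = Fintype.card V then
      (if j < g T i then {Q T (j + 1)} else if i + 1 < T.k then {P T (i + 1)} else ∅)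
     else {mid T s})

lemma card_bag3_le (i j s : ℕ) : (bag3 T i j s).card ≤ 3 := by
  unfold bag3
  apply le_trans (Finset.card_union_le _ _)
  have h1 : ({P T i, Q T j} : Finset V).card ≤ 2 :=
    le_trans (Finset.card_insert_le _ _) (by simp)
  have h2 : (if s = Fintype.card V then
      (if j < g T i then ({Q T (j + 1)} : Finset V) else if i + 1 < T.k then {P T (i + 1)} else ∅)
     else {mid T s}).card ≤ 1 := by
    split_ifs <;> simp
  omega

/-- The main staircase bags. -/
noncomputable def Smain : Finset (ℕ ×ₗ ℕ ×ₗ ℕ) :=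
  (Finset.range T.k).biUnion
    (fun i => (Finset.Icc (hrow T i) (g T i)).image (fun j => mk3 i j (Fintype.card V)))

/-- The middle-vertex bags. -/
noncomputable def Smid : Finset (ℕ ×ₗ ℕ ×ₗ ℕ) :=
  T.M_fin.toFinset.image
    (fun m => mk3 ((T.ends m).1 : ℕ) ((T.ends m).2 : ℕ) (idx m))

noncomputable def S : Finset (ℕ ×ₗ ℕ ×ₗ ℕ) := Smain T ∪ Smid T

lemma mem_Smain {i j : ℕ} (hi : i < T.k) (h1 : hrow T i ≤ j) (h2 : j ≤ g T i) :
    mk3 i j (Fintype.card V) ∈ S T := by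
  apply Finset.mem_union_left
  rw [Smain, Finset.mem_biUnion]
  exact ⟨i, Finset.mem_range.mpr hi, Finset.mem_image.mpr ⟨j, Finset.mem_Icc.mpr ⟨h1, h2⟩, rfl⟩⟩

lemma mem_Smid {m : V} (hm : m ∈ T.M) :
    mk3 ((T.ends m).1 : ℕ) ((T.ends m).2 : ℕ) (idx m) ∈ S T := by
  apply Finset.mem_union_right
  rw [Smid, Finset.mem_image]
  exact ⟨m, T.M_fin.mem_toFinset.mpr hm, rfl⟩

lemma ends_mem_Ch {m : V} (hm : m ∈ T.M) : T.ends m ∈ Ch T :=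
  (mem_Ch T).mpr (Or.inr ⟨m, hm, rfl⟩)

/-- Structure of elements of `S`. -/
lemma S_struct {x : ℕ ×ₗ ℕ ×ₗ ℕ} (hx : x ∈ S T) :
    ∃ i j s, x = mk3 i j s ∧ i < T.k ∧ hrow T i ≤ j ∧ j ≤ g T i ∧ s ≤ Fintype.card V ∧
      (s = Fintype.card V ∨
        (s < Fintype.card V ∧ mid T s ∈ T.M ∧
          i = ((T.ends (mid T s)).1 : ℕ) ∧ j = ((T.ends (mid T s)).2 : ℕ))) := by
  rcases Finset.mem_union.mp hx with hx | hx
  · rw [Smain, Finset.mem_biUnion] at hx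
    obtain ⟨i, hi, hx⟩ := hx
    rw [Finset.mem_image] at hx
    obtain ⟨j, hj, rfl⟩ := hx
    rw [Finset.mem_Icc] at hj
    exact ⟨i, j, _, rfl, Finset.mem_range.mp hi, hj.1, hj.2, le_refl _, Or.inl rfl⟩
  · rw [Smid, Finset.mem_image] at hx
    obtain ⟨m, hm, rfl⟩ := hx
    rw [Set.Finite.mem_toFinset] at hm
    have hch := ends_mem_Ch T hm
    refine ⟨_, _, _, rfl, (T.ends m).1.isLt, hrow_le_chord T hch, chord_le_g T hch,
      le_of_lt (idx_lt m), Or.inr ⟨idx_lt m, ?_, ?_, ?_⟩⟩ <;> simp [mid_idx, hm]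

/-- The bag function on the index type. -/
noncomputable def B (x : ℕ ×ₗ ℕ ×ₗ ℕ) : Finset V :=
  bag3 T (ofLex x).1 (ofLex ((ofLex x).2)).1 (ofLex ((ofLex x).2)).2

lemma B_mk3 (i j s : ℕ) : B T (mk3 i j s) = bag3 T i j s := rfl

lemma card_B_le (x : ℕ ×ₗ ℕ ×ₗ ℕ) : (B T x).card ≤ 3 := card_bag3_le T _ _ _

lemma j_lt_l {i j : ℕ} (hjg : j ≤ g T i) : j < T.l := by
  have := g_le_l T i
  have := T.lpos
  omega

lemma mem_bag3_p {i j s : ℕ} (hik : i < T.k) (hjg : j ≤ g T i)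
    (hs : s = Fintype.card V ∨ mid T s ∈ T.M) {i₀ : ℕ} (hi₀ : i₀ < T.k) :
    P T i₀ ∈ bag3 T i j s ↔
      i = i₀ ∨ (s = Fintype.card V ∧ g T i ≤ j ∧ i + 1 < T.k ∧ i + 1 = i₀) := by
  unfold bag3
  simp only [Finset.mem_union, Finset.mem_insert, Finset.mem_singleton]
  constructor
  · rintro ((h | h) | h)
    · exact Or.inl (P_inj T hi₀ hik h).symm
    · exact absurd h (P_ne_Q T i₀ j)
    · split_ifs at h with h1 h2 h3
      · exact absurd (Finset.mem_singleton.mp h) (P_ne_Q T i₀ (j + 1))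
      · have := P_inj T hi₀ h3 (Finset.mem_singleton.mp h)
        exact Or.inr ⟨h1, by omega, h3, this.symm⟩
      · exact absurd h (Finset.notMem_empty _)
      · rcases hs with hs | hs
        · exact absurd hs h1
        · exact absurd (Finset.mem_singleton.mp h).symm
            (by rw [P_eq T hi₀]; exact T.M_ne_p hs _)
  · rintro (rfl | ⟨hs', hgj, hik1, hio⟩)
    · exact Or.inl (Or.inl rfl)
    · refine Or.inr ?_
      rw [if_pos hs', if_neg (by omega), if_pos hik1, Finset.mem_singleton, hio]

lemma mem_bag3_q {i j s : ℕ} (hik : i < T.k) (hjg : j ≤ g T i)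
    (hs : s = Fintype.card V ∨ mid T s ∈ T.M) {j₀ : ℕ} (hj₀ : j₀ < T.l) :
    Q T j₀ ∈ bag3 T i j s ↔
      j = j₀ ∨ (s = Fintype.card V ∧ j < g T i ∧ j + 1 = j₀) := by
  have hjl : j < T.l := j_lt_l T hjg
  unfold bag3
  simp only [Finset.mem_union, Finset.mem_insert, Finset.mem_singleton]
  constructor
  · rintro ((h | h) | h)
    · exact absurd h.symm (P_ne_Q T i j₀)
    · exact Or.inl (Q_inj T hj₀ hjl h).symm
    · split_ifs at h with h1 h2 h3
      · have hj1l : j + 1 < T.l := by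
          have := g_le_l T i; have := T.lpos; omega
        have := Q_inj T hj₀ hj1l (Finset.mem_singleton.mp h)
        exact Or.inr ⟨h1, h2, this.symm⟩
      · exact absurd (Finset.mem_singleton.mp h).symm (P_ne_Q T (i + 1) j₀)
      · exact absurd h (Finset.notMem_empty _)
      · rcases hs with hs | hs
        · exact absurd hs h1
        · exact absurd (Finset.mem_singleton.mp h).symm
            (by rw [Q_eq T hj₀]; exact T.M_ne_q hs _)
  · rintro (rfl | ⟨hs', hlt, hjo⟩)
    · exact Or.inl (Or.inr rfl)
    · refine Or.inr ?_
      rw [if_pos hs', if_pos hlt, Finset.mem_singleton, hjo]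

lemma mem_bag3_m {i j s : ℕ} (hik : i < T.k) (hjg : j ≤ g T i)
    (hs : s = Fintype.card V ∨ mid T s ∈ T.M) {m : V} (hm : m ∈ T.M) :
    m ∈ bag3 T i j s ↔ s ≠ Fintype.card V ∧ mid T s = m := by
  have hjl : j < T.l := j_lt_l T hjg
  unfold bag3
  simp only [Finset.mem_union, Finset.mem_insert, Finset.mem_singleton]
  constructor
  · rintro ((h | h) | h)
    · exact absurd h (by rw [P_eq T hik]; exact T.M_ne_p hm _)
    · exact absurd h (by rw [Q_eq T hjl]; exact T.M_ne_q hm _)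
    · split_ifs at h with h1 h2 h3
      · have hj1l : j + 1 < T.l := by
          have := g_le_l T i; have := T.lpos; omega
        exact absurd (Finset.mem_singleton.mp h)
          (by rw [Q_eq T hj1l]; exact T.M_ne_q hm _)
      · exact absurd (Finset.mem_singleton.mp h)
          (by rw [P_eq T h3]; exact T.M_ne_p hm _)
      · exact absurd h (Finset.notMem_empty _)
      · exact ⟨h1, (Finset.mem_singleton.mp h).symm⟩
  · rintro ⟨h1, h2⟩
    refine Or.inr ?_
    rw [if_neg h1, Finset.mem_singleton, h2]

lemma coords_mono {i j s i' j' s' : ℕ} (hjg : j ≤ g T i) (hj' : hrow T i' ≤ j')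
    (h : mk3 i j s ≤ mk3 i' j' s') : i ≤ i' ∧ j ≤ j' := by
  rw [mk3_le_mk3] at h
  rcases h with h | ⟨rfl, h⟩
  · refine ⟨le_of_lt h, ?_⟩
    have h0 : 0 < i' := by omega
    rw [hrow_pos T h0] at hj'
    have := g_mono T (show i ≤ i' - 1 by omega)
    omega
  · exact ⟨le_refl _, by omega⟩

/-- The key convexity lemma: bags containing a fixed vertex form an interval in `S`. -/
lemma convex {x y z : ℕ ×ₗ ℕ ×ₗ ℕ} (hx : x ∈ S T) (hy : y ∈ S T) (hz : z ∈ S T)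
    (hxy : x ≤ y) (hyz : y ≤ z) {v : V} (hvx : v ∈ B T x) (hvz : v ∈ B T z) :
    v ∈ B T y := by
  obtain ⟨i1, j1, s1, rfl, hik1, hh1, hg1, hsc1, hst1⟩ := S_struct T hx
  obtain ⟨i2, j2, s2, rfl, hik2, hh2, hg2, hsc2, hst2⟩ := S_struct T hy
  obtain ⟨i3, j3, s3, rfl, hik3, hh3, hg3, hsc3, hst3⟩ := S_struct T hz
  rw [B_mk3] at hvx hvz ⊢
  have hm1 : s1 = Fintype.card V ∨ mid T s1 ∈ T.M := by tauto
  have hm2 : s2 = Fintype.card V ∨ mid T s2 ∈ T.M := by tauto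
  have hm3 : s3 = Fintype.card V ∨ mid T s3 ∈ T.M := by tauto
  have hmono1 := coords_mono T hg1 hh2 hxy
  have hmono2 := coords_mono T hg2 hh3 hyz
  rcases T.vert_cover v with ⟨i₀f, rfl⟩ | ⟨j₀f, rfl⟩ | hvm
  · -- v = p i₀
    rw [P_eq' T i₀f] at hvx hvz ⊢
    set i₀ := (i₀f : ℕ) with hi₀def
    have hi₀ : i₀ < T.k := i₀f.isLt
    rw [mem_bag3_p T hik1 hg1 hm1 hi₀] at hvx
    rw [mem_bag3_p T hik3 hg3 hm3 hi₀] at hvz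
    rw [mem_bag3_p T hik2 hg2 hm2 hi₀]
    by_cases h2 : i2 = i₀
    · exact Or.inl h2
    · -- then i2 = i₀ - 1, and x is a "corner" bag
      have hi1 : i1 + 1 = i₀ ∧ ¬ i1 = i₀ := by omega
      rcases hvx with h | hvx
      · omega
      obtain ⟨hs1c, hgj1, hik1', hio1⟩ := hvx
      have hi12 : i1 = i2 := by omega
      -- from x ≤ y with equal first coordinates, deduce y is the same corner bag
      rw [mk3_le_mk3] at hxy
      rcases hxy with h | ⟨_, h⟩
      · omega
      have hj12 : j1 = j2 := by
        have : g T i2 = g T i1 := by rw [hi12]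
        omega
      have hs2c : s2 = Fintype.card V := by
        rcases h with h | ⟨_, h⟩
        · omega
        · omega
      refine Or.inr ⟨hs2c, ?_, ?_, ?_⟩ <;> rw [← hi12] <;> omega
  · -- v = q j₀
    rw [Q_eq' T j₀f] at hvx hvz ⊢
    set j₀ := (j₀f : ℕ) with hj₀def
    have hj₀ : j₀ < T.l := j₀f.isLt
    rw [mem_bag3_q T hik1 hg1 hm1 hj₀] at hvx
    rw [mem_bag3_q T hik3 hg3 hm3 hj₀] at hvz
    rw [mem_bag3_q T hik2 hg2 hm2 hj₀]
    by_cases h2 : j2 = j₀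
    · exact Or.inl h2
    · have hj3 : j3 ≤ j₀ := by rcases hvz with h | h <;> omega
      have hj1 : j1 + 1 = j₀ ∧ ¬ j1 = j₀ := by
        rcases hvx with h | h <;> omega
      rcases hvx with h | hvx
      · omega
      obtain ⟨hs1c, hlt1, hjo1⟩ := hvx
      -- i1 = i2, else row of y would exceed j1
      have hi12 : i1 = i2 := by
        rcases Nat.lt_or_ge i1 i2 with h | h
        · exfalso
          have h0 : 0 < i2 := by omega
          rw [hrow_pos T h0] at hh2
          have := g_mono T (show i1 ≤ i2 - 1 by omega)
          omega
        · omega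
      rw [mk3_le_mk3] at hxy
      rcases hxy with h | ⟨_, h⟩
      · omega
      have hj12 : j1 = j2 := by omega
      have hs2c : s2 = Fintype.card V := by
        rcases h with h | ⟨_, h⟩ <;> omega
      refine Or.inr ⟨hs2c, ?_, ?_⟩
      · rw [← hi12]; omega
      · omega
  · -- v is a middle vertex: it occurs in exactly one bag
    rw [mem_bag3_m T hik1 hg1 hm1 hvm] at hvx
    rw [mem_bag3_m T hik3 hg3 hm3 hvm] at hvz
    rw [mem_bag3_m T hik2 hg2 hm2 hvm]
    obtain ⟨hs1ne, hmid1⟩ := hvx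
    obtain ⟨hs3ne, hmid3⟩ := hvz
    rcases hst1 with h | ⟨hlt1, _, hie1, hje1⟩
    · exact absurd h hs1ne
    rcases hst3 with h | ⟨hlt3, _, hie3, hje3⟩
    · exact absurd h hs3ne
    have hs13 : s1 = s3 := mid_inj T hlt1 hlt3 (by rw [hmid1, hmid3])
    have hxz : mk3 i1 j1 s1 = mk3 i3 j3 s3 := by
      rw [mk3_inj]
      refine ⟨?_, ?_, hs13⟩
      · rw [hie1, hie3, hmid1, hmid3]
      · rw [hje1, hje3, hmid1, hmid3]
    have hyx : mk3 i2 j2 s2 = mk3 i1 j1 s1 :=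
      le_antisymm (hxz ▸ hyz) hxy
    rw [mk3_inj] at hyx
    obtain ⟨rfl, rfl, rfl⟩ := hyx
    exact ⟨hs1ne, hmid1⟩

lemma P_mem_bag3 (i j s : ℕ) : P T i ∈ bag3 T i j s := by
  unfold bag3; simp

lemma Q_mem_bag3 (i j s : ℕ) : Q T j ∈ bag3 T i j s := by
  unfold bag3; simp

lemma Q_succ_mem_bag3 {i j : ℕ} (h : j < g T i) :
    Q T (j + 1) ∈ bag3 T i j (Fintype.card V) := by
  unfold bag3
  rw [if_pos rfl, if_pos h]
  simp

lemma P_succ_mem_bag3 {i j : ℕ} (h1 : g T i ≤ j) (h2 : i + 1 < T.k) :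
    P T (i + 1) ∈ bag3 T i j (Fintype.card V) := by
  unfold bag3
  rw [if_pos rfl, if_neg (by omega), if_pos h2]
  simp

lemma mid_mem_bag3 {i j s : ℕ} (h : s ≠ Fintype.card V) : mid T s ∈ bag3 T i j s := by
  unfold bag3
  rw [if_neg h]
  simp

lemma row_covered {j₀ : ℕ} (hj : j₀ ≤ T.l - 1) :
    ∃ i, i < T.k ∧ hrow T i ≤ j₀ ∧ j₀ ≤ g T i := by
  have hex : ∃ i, j₀ ≤ g T i := ⟨T.k - 1, by rw [g_last]; exact hj⟩
  have hspec := Nat.find_spec hex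
  have hle : Nat.find hex ≤ T.k - 1 := Nat.find_le (by rw [g_last]; exact hj)
  refine ⟨Nat.find hex, by have := T.kpos; omega, ?_, hspec⟩
  rcases Nat.eq_zero_or_pos (Nat.find hex) with h0 | h0
  · rw [h0, hrow_zero]; omega
  · rw [hrow_pos T h0]
    have := Nat.find_min hex (m := Nat.find hex - 1) (by omega)
    omega

lemma row_edge {j₀ : ℕ} (hj : j₀ + 1 ≤ T.l - 1) :
    ∃ i, i < T.k ∧ hrow T i ≤ j₀ ∧ j₀ + 1 ≤ g T i := by
  have hex : ∃ i, j₀ + 1 ≤ g T i := ⟨T.k - 1, by rw [g_last]; exact hj⟩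
  have hspec := Nat.find_spec hex
  have hle : Nat.find hex ≤ T.k - 1 := Nat.find_le (by rw [g_last]; exact hj)
  refine ⟨Nat.find hex, by have := T.kpos; omega, ?_, hspec⟩
  rcases Nat.eq_zero_or_pos (Nat.find hex) with h0 | h0
  · rw [h0, hrow_zero]; omega
  · rw [hrow_pos T h0]
    have := Nat.find_min hex (m := Nat.find hex - 1) (by omega)
    omega

lemma exists_bag (v : V) : ∃ x ∈ S T, v ∈ B T x := by
  rcases T.vert_cover v with ⟨i₀f, rfl⟩ | ⟨j₀f, rfl⟩ | hm
  · refine ⟨mk3 (i₀f : ℕ) (hrow T (i₀f : ℕ)) (Fintype.card V),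
      mem_Smain T i₀f.isLt (le_refl _) (hrow_le_g T _), ?_⟩
    rw [B_mk3, P_eq' T i₀f]
    exact P_mem_bag3 T _ _ _
  · obtain ⟨i, hik, h1, h2⟩ :=
      row_covered T (show (j₀f : ℕ) ≤ T.l - 1 by have := j₀f.isLt; omega)
    refine ⟨mk3 i (j₀f : ℕ) (Fintype.card V), mem_Smain T hik h1 h2, ?_⟩
    rw [B_mk3, Q_eq' T j₀f]
    exact Q_mem_bag3 T _ _ _
  · refine ⟨mk3 ((T.ends v).1 : ℕ) ((T.ends v).2 : ℕ) (idx v), mem_Smid T hm, ?_⟩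
    rw [B_mk3]
    have hne : idx v ≠ Fintype.card V := by have := idx_lt v; omega
    have := mid_mem_bag3 T (i := ((T.ends v).1 : ℕ)) (j := ((T.ends v).2 : ℕ)) hne
    rwa [mid_idx] at this

lemma exists_edge_bag {u w : V} (h : G.Adj u w) :
    ∃ x ∈ S T, u ∈ B T x ∧ w ∈ B T x := by
  rcases (T.adj_iff u w).mp h with
    ⟨if_, jf, hij, rfl, rfl⟩ | ⟨if_, jf, hij, rfl, rfl⟩ | ⟨c, hc, hcase⟩ | ⟨m, hm, hcase⟩
  · -- edge on the path P
    rcases hij with hij | hij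
    · refine ⟨mk3 (if_ : ℕ) (g T (if_ : ℕ)) (Fintype.card V),
        mem_Smain T if_.isLt (hrow_le_g T _) (le_refl _), ?_⟩
      rw [B_mk3, P_eq' T if_, P_eq' T jf]
      refine ⟨P_mem_bag3 T _ _ _, ?_⟩
      have hji : (jf : ℕ) = (if_ : ℕ) + 1 := hij.symm
      rw [hji]
      exact P_succ_mem_bag3 T (le_refl _) (by rw [← hji]; exact jf.isLt)
    · refine ⟨mk3 (jf : ℕ) (g T (jf : ℕ)) (Fintype.card V),
        mem_Smain T jf.isLt (hrow_le_g T _) (le_refl _), ?_⟩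
      rw [B_mk3, P_eq' T if_, P_eq' T jf]
      refine ⟨?_, P_mem_bag3 T _ _ _⟩
      have hji : (if_ : ℕ) = (jf : ℕ) + 1 := hij.symm
      rw [hji]
      exact P_succ_mem_bag3 T (le_refl _) (by rw [← hji]; exact if_.isLt)
  · -- edge on the path Q
    rcases hij with hij | hij
    · obtain ⟨i, hik, h1, h2⟩ := row_edge T (j₀ := (if_ : ℕ))
        (by have := jf.isLt; omega)
      refine ⟨mk3 i (if_ : ℕ) (Fintype.card V), mem_Smain T hik h1 (by omega), ?_⟩
      rw [B_mk3, Q_eq' T if_, Q_eq' T jf]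
      refine ⟨Q_mem_bag3 T _ _ _, ?_⟩
      have hji : (jf : ℕ) = (if_ : ℕ) + 1 := hij.symm
      rw [hji]
      exact Q_succ_mem_bag3 T (by omega)
    · obtain ⟨i, hik, h1, h2⟩ := row_edge T (j₀ := (jf : ℕ))
        (by have := if_.isLt; omega)
      refine ⟨mk3 i (jf : ℕ) (Fintype.card V), mem_Smain T hik h1 (by omega), ?_⟩
      rw [B_mk3, Q_eq' T if_, Q_eq' T jf]
      refine ⟨?_, Q_mem_bag3 T _ _ _⟩
      have hji : (if_ : ℕ) = (jf : ℕ) + 1 := hij.symm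
      rw [hji]
      exact Q_succ_mem_bag3 T (by omega)
  · -- a short chord
    have hch : c ∈ Ch T := (mem_Ch T).mpr (Or.inl hc)
    refine ⟨mk3 (c.1 : ℕ) (c.2 : ℕ) (Fintype.card V),
      mem_Smain T c.1.isLt (hrow_le_chord T hch) (chord_le_g T hch), ?_⟩
    rw [B_mk3]
    rcases hcase with ⟨rfl, rfl⟩ | ⟨rfl, rfl⟩
    · exact ⟨by rw [P_eq' T c.1]; exact P_mem_bag3 T _ _ _,
        by rw [Q_eq' T c.2]; exact Q_mem_bag3 T _ _ _⟩
    · exact ⟨by rw [Q_eq' T c.2]; exact Q_mem_bag3 T _ _ _,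
        by rw [P_eq' T c.1]; exact P_mem_bag3 T _ _ _⟩
  · -- a long chord
    refine ⟨mk3 ((T.ends m).1 : ℕ) ((T.ends m).2 : ℕ) (idx m), mem_Smid T hm, ?_⟩
    rw [B_mk3]
    have hne : idx m ≠ Fintype.card V := by have := idx_lt m; omega
    have hmmem : m ∈ bag3 T ((T.ends m).1 : ℕ) ((T.ends m).2 : ℕ) (idx m) := by
      have := mid_mem_bag3 T (i := ((T.ends m).1 : ℕ)) (j := ((T.ends m).2 : ℕ)) hne
      rwa [mid_idx] at this
    rcases hcase with ⟨rfl, hw⟩ | ⟨rfl, hu⟩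
    · refine ⟨hmmem, ?_⟩
      rcases hw with rfl | rfl
      · rw [P_eq' T (T.ends u).1]; exact P_mem_bag3 T _ _ _
      · rw [Q_eq' T (T.ends u).2]; exact Q_mem_bag3 T _ _ _
    · refine ⟨?_, hmmem⟩
      rcases hu with rfl | rfl
      · rw [P_eq' T (T.ends w).1]; exact P_mem_bag3 T _ _ _
      · rw [Q_eq' T (T.ends w).2]; exact Q_mem_bag3 T _ _ _

/-- The path decomposition of a track built from the staircase of chords. -/
noncomputable def decomp : PathDecomp G where
  n := (S T).card
  bag i := B T (((S T).orderIsoOfFin rfl i : (S T)) : ℕ ×ₗ ℕ ×ₗ ℕ)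
  mem_bag v := by
    obtain ⟨x, hx, hv⟩ := exists_bag T v
    refine ⟨((S T).orderIsoOfFin rfl).symm ⟨x, hx⟩, ?_⟩
    simpa using hv
  edge_bag := fun u w h => by
    obtain ⟨x, hx, hu, hw⟩ := exists_edge_bag T h
    refine ⟨((S T).orderIsoOfFin rfl).symm ⟨x, hx⟩, ?_, ?_⟩
    · simpa using hu
    · simpa using hw
  interp i j k hij hjk v hvi hvk := by
    exact convex T (((S T).orderIsoOfFin rfl) i).2 (((S T).orderIsoOfFin rfl) j).2
      (((S T).orderIsoOfFin rfl) k).2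
      (Subtype.coe_le_coe.mpr (((S T).orderIsoOfFin rfl).monotone hij))
      (Subtype.coe_le_coe.mpr (((S T).orderIsoOfFin rfl).monotone hjk)) hvi hvk

lemma card_decomp_bag_le (i : Fin (decomp T).n) : ((decomp T).bag i).card ≤ 3 :=
  card_B_le T _

end TrackPW

/-- Every track has path-width at most 2. -/
theorem pathWidth_le_two_of_isTrack {V : Type u} [Fintype V] (G : SimpleGraph V)
    (h : IsTrack G) : pathWidth G ≤ 2 := by
  classical
  obtain ⟨T⟩ := h
  have hw : (TrackPW.decomp T).width ≤ 2 := by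
    have hsup : (Finset.univ.sup fun i => ((TrackPW.decomp T).bag i).card) ≤ 3 :=
      Finset.sup_le fun i _ => TrackPW.card_decomp_bag_le T i
    unfold PathDecomp.width
    omega
  exact le_trans (Nat.sInf_le ⟨TrackPW.decomp T, rfl⟩) hw
end

section
/- Let G be a 2-connected finite simple graph with path-width at most 2 and let C be a longest cycle of G. Then every bridge of C has exactly two legs. -/
open SimpleGraph

universe u v

section AuxLemmas
variable {V : Type u} {G : SimpleGraph V}

lemma exists_walk_of_chain : ∀ (l : List V), l.Chain' G.Adj →
    ∀ u ∈ l, ∀ v ∈ l, ∃ p : G.Walk u v, ∀ z ∈ p.support, z ∈ l := by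
  intro l
  induction l with
  | nil => intro _ u hu; simp at hu
  | cons x t ih =>
    intro hch u hu v hv
    have hx : ∀ w ∈ x :: t, ∃ p : G.Walk x w, ∀ z ∈ p.support, z ∈ x :: t := by
      intro w hw
      rcases List.mem_cons.mp hw with rfl | hw
      · exact ⟨Walk.nil, by simp⟩
      · cases t with
        | nil => simp at hw
        | cons y t' =>
          have hadj : G.Adj x y := (List.isChain_cons_cons.mp hch).1
          obtain ⟨p, hp⟩ := ih (List.isChain_cons_cons.mp hch).2 y (by simp) w hw
          refine ⟨Walk.cons hadj p, ?_⟩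
          intro z hz
          rcases List.mem_cons.mp (by simpa using hz) with rfl | hz'
          · simp
          · exact List.mem_cons_of_mem _ (hp z hz')
    rcases List.mem_cons.mp hu with rfl | hu'
    · exact hx v hv
    · rcases List.mem_cons.mp hv with rfl | hv'
      · obtain ⟨p, hp⟩ := hx u hu
        exact ⟨p.reverse, by intro z hz; exact hp z (by simpa using hz)⟩
      · obtain ⟨p, hp⟩ := ih hch.tail u hu' v hv'
        exact ⟨p, fun z hz => List.mem_cons_of_mem _ (hp z hz)⟩

lemma exists_mem_bag (D : PathDecomp G) {S : Set V} :
    ∀ {a b : V} (p : G.Walk a b), (∀ z ∈ p.support, z ∈ S) →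
    ∀ (i j k : Fin D.n), i ≤ j → j ≤ k → a ∈ D.bag i → b ∈ D.bag k →
    ∃ z ∈ S, z ∈ D.bag j := by
  intro a b p
  induction p with
  | nil =>
    intro hS i j k hij hjk ha hb
    exact ⟨_, hS _ (by simp), D.interp i j k hij hjk _ ha hb⟩
  | @cons uu vv ww hadj q ih =>
    intro hS i j k hij hjk ha hb
    by_cases haj : uu ∈ D.bag j
    · exact ⟨_, hS _ (by simp), haj⟩
    · obtain ⟨m, ham, hwm⟩ := D.edge_bag hadj
      have hmj : m ≤ j := by
        by_contra h
        exact haj (D.interp i j m hij (le_of_not_ge h) _ ha ham)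
      exact ih (fun z hz => hS z (by simp [hz])) m j k hmj hjk hwm hb

lemma exists_exit {N : Set V} :
    ∀ {a b : V} (p : G.Walk a b), a ∈ N → b ∉ N →
    ∃ s t, s ∈ N ∧ t ∉ N ∧ G.Adj s t ∧ t ∈ p.support := by
  intro a b p
  induction p with
  | nil => intro h1 h2; exact absurd h1 h2
  | @cons a' w b' hadj q ih =>
    intro h1 h2
    by_cases hm : w ∈ N
    · obtain ⟨s, t, h⟩ := ih hm h2
      exact ⟨s, t, h.1, h.2.1, h.2.2.1, by simp [h.2.2.2]⟩
    · exact ⟨a', w, h1, hm, hadj, by simp⟩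

end AuxLemmas
lemma four_sets {V : Type u} {G : SimpleGraph V} (D : PathDecomp G)
    (hcard : ∀ i, (D.bag i).card ≤ 3) (S : Fin 4 → Set V)
    (hne : ∀ t, (S t).Nonempty)
    (hdisj : ∀ s t, s ≠ t → ∀ z, z ∈ S s → z ∉ S t)
    (hconn : ∀ t, ∀ u ∈ S t, ∀ v ∈ S t, ∃ p : G.Walk u v, ∀ z ∈ p.support, z ∈ S t)
    (hadj : ∀ s t, s ≠ t → ∃ u ∈ S s, ∃ v ∈ S t, G.Adj u v) : False := by
  classical
  set I : Fin 4 → Set ℕ := fun t => {j | ∃ hj : j < D.n, ∃ z ∈ S t, z ∈ D.bag ⟨j, hj⟩} with hI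
  have hIne : ∀ t, (I t).Nonempty := by
    intro t
    obtain ⟨z, hz⟩ := hne t
    obtain ⟨i, hi⟩ := D.mem_bag z
    exact ⟨i.1, i.2, z, hz, by simpa using hi⟩
  have hintv : ∀ t, ∀ j1 ∈ I t, ∀ j3 ∈ I t, ∀ j2, j1 ≤ j2 → j2 ≤ j3 → j2 ∈ I t := by
    intro t j1 hj1 j3 hj3 j2 h12 h23
    obtain ⟨hlt1, z1, hz1, hb1⟩ := hj1
    obtain ⟨hlt3, z3, hz3, hb3⟩ := hj3
    have hlt2 : j2 < D.n := lt_of_le_of_lt h23 hlt3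
    obtain ⟨p, hp⟩ := hconn t z1 hz1 z3 hz3
    obtain ⟨z, hzS, hzb⟩ := exists_mem_bag D p hp ⟨j1, hlt1⟩ ⟨j2, hlt2⟩ ⟨j3, hlt3⟩ h12 h23 hb1 hb3
    exact ⟨hlt2, z, hzS, hzb⟩
  set m : Fin 4 → ℕ := fun t => sInf (I t) with hm
  have hmI : ∀ t, m t ∈ I t := fun t => Nat.sInf_mem (hIne t)
  obtain ⟨t0, -, ht0⟩ := Finset.exists_max_image Finset.univ m ⟨0, Finset.mem_univ 0⟩
  have hlt : m t0 < D.n := (hmI t0).1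
  have hall : ∀ t, ∃ z ∈ S t, z ∈ D.bag ⟨m t0, hlt⟩ := by
    intro t
    by_cases h : t = t0
    · subst h; obtain ⟨_, z, hz, hb⟩ := hmI t; exact ⟨z, hz, hb⟩
    · obtain ⟨u, hu, w, hw, huw⟩ := hadj t t0 h
      obtain ⟨i, hui, hwi⟩ := D.edge_bag huw
      have hiIt : (i : ℕ) ∈ I t := ⟨i.2, u, hu, by simpa using hui⟩
      have hiIt0 : (i : ℕ) ∈ I t0 := ⟨i.2, w, hw, by simpa using hwi⟩
      have h1 : m t ≤ m t0 := ht0 t (Finset.mem_univ t)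
      have h2 : m t0 ≤ (i : ℕ) := Nat.sInf_le hiIt0
      obtain ⟨_, z, hz, hb⟩ := hintv t (m t) (hmI t) (i : ℕ) hiIt (m t0) h1 h2
      exact ⟨z, hz, hb⟩
  choose z hzS hzb using hall
  have hzinj : Function.Injective z := by
    intro s t h
    by_contra hne'
    exact hdisj s t hne' (z s) (hzS s) (h ▸ hzS t)
  have hsub : Finset.univ.image z ⊆ D.bag ⟨m t0, hlt⟩ := by
    intro w hw
    obtain ⟨t, -, rfl⟩ := Finset.mem_image.mp hw
    exact hzb t
  have := Finset.card_le_card hsub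
  rw [Finset.card_image_of_injective _ hzinj, Finset.card_univ, Fintype.card_fin] at this
  exact absurd (le_trans this (hcard _)) (by norm_num)
section Aux3
variable {V : Type u} {G : SimpleGraph V}

lemma support_tail_ne_nil {a b : V} (p : G.Walk a b) (hp : ¬ p.Nil) :
    p.support.tail ≠ [] := by
  intro h
  have h1 := p.length_support
  rw [p.support_eq_cons] at h1
  rw [h] at h1
  simp only [List.length_cons, List.length_nil] at h1
  exact hp (Walk.nil_iff_length_eq.mpr (by omega))

lemma dropLast_support_append {a b c : V} (p : G.Walk a b) (q : G.Walk b c) (hq : ¬ q.Nil) :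
    (p.append q).support.dropLast = p.support.dropLast ++ q.support.dropLast := by
  have htq : q.support.tail ≠ [] := support_tail_ne_nil q hq
  have h1 : (p.append q).support = p.support ++ q.support.tail := Walk.support_append p q
  have h2 : q.support.dropLast = b :: q.support.tail.dropLast := by
    conv_lhs => rw [q.support_eq_cons]
    exact List.dropLast_cons_of_ne_nil htq
  have h3 : p.support.dropLast ++ [b] = p.support := by
    have := List.dropLast_append_getLast (p.support_ne_nil)
    rwa [p.getLast_support] at this
  rw [h1, List.dropLast_append_of_ne_nil htq, h2]
  rw [show p.support.dropLast ++ (b :: q.support.tail.dropLast)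
      = (p.support.dropLast ++ [b]) ++ q.support.tail.dropLast by
        rw [List.append_assoc, List.singleton_append], h3]

lemma closed_mem_support_tail {a : V} (p : G.Walk a a) (hp : ¬ p.Nil) {z : V} :
    z ∈ p.support ↔ z ∈ p.support.tail := by
  constructor
  · intro hz
    rw [p.support_eq_cons] at hz
    rcases List.mem_cons.mp hz with rfl | h
    · have h1 : p.support.tail.getLast (support_tail_ne_nil p hp) = z := by
        rw [List.getLast_tail]; exact p.getLast_support
      have h2 := List.getLast_mem (support_tail_ne_nil p hp)
      rwa [h1] at h2
    · exact h
  · intro hz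
    exact List.mem_of_mem_tail hz

lemma dropLast_support_nodup {a : V} (p : G.Walk a a) (hp : p.IsCycle) :
    p.support.dropLast.Nodup := by
  have hnn : ¬ p.Nil := by
    intro h
    have := hp.three_le_length
    rw [Walk.nil_iff_length_eq.mp h] at this
    omega
  have htne := support_tail_ne_nil p hnn
  have hnd : p.support.tail.Nodup := hp.support_nodup
  have hlast : p.support.tail.getLast htne = a := by
    rw [List.getLast_tail]; exact p.getLast_support
  have hdecomp : p.support.tail.dropLast ++ [a] = p.support.tail := by
    have := List.dropLast_append_getLast htne
    rwa [hlast] at this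
  have hanot : a ∉ p.support.tail.dropLast := by
    intro ha
    have := hdecomp ▸ hnd
    rcases (List.nodup_append'.mp this) with ⟨-, -, hdisj⟩
    exact hdisj ha (by simp)
  have h2 : p.support.dropLast = a :: p.support.tail.dropLast := by
    conv_lhs => rw [p.support_eq_cons]
    exact List.dropLast_cons_of_ne_nil htne
  rw [h2]
  exact List.nodup_cons.mpr ⟨hanot, hnd.sublist (List.dropLast_sublist _)⟩

end Aux3
section Aux4
variable {V : Type u} {G : SimpleGraph V}

lemma takeUntil_start [DecidableEq V] {u v : V} (p : G.Walk u v) (h : u ∈ p.support) :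
    p.takeUntil u h = Walk.nil := by
  cases p with
  | nil => rfl
  | cons r q => simp [Walk.takeUntil]

lemma takeUntil_cons_ne [DecidableEq V] {a b c y : V} (r : G.Adj a b) (q : G.Walk b c)
    (hy : y ∈ (Walk.cons r q).support) (hay : a ≠ y) (hy' : y ∈ q.support) :
    (Walk.cons r q).takeUntil y hy = Walk.cons r (q.takeUntil y hy') := by
  simp [Walk.takeUntil, hay]

lemma mem_takeUntil_antisymm [DecidableEq V] :
    ∀ {u v : V} (p : G.Walk u v) {y z : V} (hy : y ∈ p.support) (hz : z ∈ p.support),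
      z ∈ (p.takeUntil y hy).support → y ∈ (p.takeUntil z hz).support → y = z := by
  intro u v p
  induction p with
  | nil =>
    intro y z hy hz _ _
    rw [Walk.mem_support_nil_iff] at hy hz
    rw [hy, hz]
  | @cons a b c r q ih =>
    intro y z hy hz h1 h2
    by_cases hay : a = y
    · subst hay
      rw [takeUntil_start] at h1
      have : z = a := by simpa using h1
      exact this.symm
    · by_cases haz : a = z
      · subst haz
        rw [takeUntil_start] at h2
        simpa using h2
      · have hy' : y ∈ q.support := by
          rcases Walk.mem_support_iff _ |>.mp hy with h | h
          · exact absurd h.symm hay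
          · exact h
        have hz' : z ∈ q.support := by
          rcases Walk.mem_support_iff _ |>.mp hz with h | h
          · exact absurd h.symm haz
          · exact h
        rw [takeUntil_cons_ne r q hy hay hy'] at h1
        rw [takeUntil_cons_ne r q hz haz hz'] at h2
        have h1' : z ∈ (q.takeUntil y hy').support := by
          rcases Walk.mem_support_iff _ |>.mp h1 with h | h
          · exact absurd h.symm haz
          · exact h
        have h2' : y ∈ (q.takeUntil z hz').support := by
          rcases Walk.mem_support_iff _ |>.mp h2 with h | h
          · exact absurd h.symm hay
          · exact h
        exact ih hy' hz' h1' h2'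

end Aux4
section Aux5
variable {V : Type u} {G : SimpleGraph V}

lemma four_sets' (D : PathDecomp G) (hcard : ∀ i, (D.bag i).card ≤ 3)
    (S0 S1 S2 S3 : Set V)
    (hne0 : S0.Nonempty) (hne1 : S1.Nonempty) (hne2 : S2.Nonempty) (hne3 : S3.Nonempty)
    (d01 : ∀ z, z ∈ S0 → z ∉ S1) (d02 : ∀ z, z ∈ S0 → z ∉ S2) (d03 : ∀ z, z ∈ S0 → z ∉ S3)
    (d12 : ∀ z, z ∈ S1 → z ∉ S2) (d13 : ∀ z, z ∈ S1 → z ∉ S3) (d23 : ∀ z, z ∈ S2 → z ∉ S3)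
    (c0 : ∀ u ∈ S0, ∀ v ∈ S0, ∃ p : G.Walk u v, ∀ z ∈ p.support, z ∈ S0)
    (c1 : ∀ u ∈ S1, ∀ v ∈ S1, ∃ p : G.Walk u v, ∀ z ∈ p.support, z ∈ S1)
    (c2 : ∀ u ∈ S2, ∀ v ∈ S2, ∃ p : G.Walk u v, ∀ z ∈ p.support, z ∈ S2)
    (c3 : ∀ u ∈ S3, ∀ v ∈ S3, ∃ p : G.Walk u v, ∀ z ∈ p.support, z ∈ S3)
    (a01 : ∃ u ∈ S0, ∃ v ∈ S1, G.Adj u v) (a02 : ∃ u ∈ S0, ∃ v ∈ S2, G.Adj u v)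
    (a03 : ∃ u ∈ S0, ∃ v ∈ S3, G.Adj u v) (a12 : ∃ u ∈ S1, ∃ v ∈ S2, G.Adj u v)
    (a13 : ∃ u ∈ S1, ∃ v ∈ S3, G.Adj u v) (a23 : ∃ u ∈ S2, ∃ v ∈ S3, G.Adj u v) : False := by
  have hsymm : ∀ (A B : Set V), (∃ u ∈ A, ∃ v ∈ B, G.Adj u v) → (∃ u ∈ B, ∃ v ∈ A, G.Adj u v) := by
    rintro A B ⟨u, hu, v, hv, h⟩; exact ⟨v, hv, u, hu, h.symm⟩
  apply four_sets D hcard ![S0, S1, S2, S3]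
  · intro t; fin_cases t <;> simpa using ‹_›
  · intro s t hst z hzs hzt
    fin_cases s <;> fin_cases t <;> simp at hzs hzt <;>
      first
        | exact hst rfl
        | exact d01 z hzs hzt | exact d01 z hzt hzs
        | exact d02 z hzs hzt | exact d02 z hzt hzs
        | exact d03 z hzs hzt | exact d03 z hzt hzs
        | exact d12 z hzs hzt | exact d12 z hzt hzs
        | exact d13 z hzs hzt | exact d13 z hzt hzs
        | exact d23 z hzs hzt | exact d23 z hzt hzs
  · intro t; fin_cases t <;> simpa using ‹_›
  · intro s t hst
    fin_cases s <;> fin_cases t <;> simp <;>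
      first
        | exact absurd rfl hst
        | exact a01 | exact hsymm _ _ a01
        | exact a02 | exact hsymm _ _ a02
        | exact a03 | exact hsymm _ _ a03
        | exact a12 | exact hsymm _ _ a12
        | exact a13 | exact hsymm _ _ a13
        | exact a23 | exact hsymm _ _ a23

end Aux5
section Aux6
variable {V : Type u} {G : SimpleGraph V}

lemma core [DecidableEq V] (D : PathDecomp G)
    (hcard : ∀ i, (D.bag i).card ≤ 3) (N : Set V)
    (hNconn : ∀ u ∈ N, ∀ v ∈ N, ∃ p : G.Walk u v, ∀ z ∈ p.support, z ∈ N)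
    {a : V} (C' : G.Walk a a) (hcyc : C'.IsCycle)
    (hNC : ∀ z ∈ C'.support, z ∉ N)
    {b c : V} (hb : b ∈ C'.support) (hba : b ≠ a) (hca : c ≠ a) (hcb : c ≠ b)
    (hc2 : c ∈ (C'.dropUntil b hb).support)
    {na nb nc : V} (hna : na ∈ N) (hnb : nb ∈ N) (hnc : nc ∈ N)
    (haa : G.Adj a na) (hab : G.Adj b nb) (hac : G.Adj c nc) : False := by
  have hspec1 : (C'.takeUntil b hb).append (C'.dropUntil b hb) = C' := C'.take_spec hb
  have hspec2 : ((C'.dropUntil b hb).takeUntil c hc2).append ((C'.dropUntil b hb).dropUntil c hc2)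
      = C'.dropUntil b hb := (C'.dropUntil b hb).take_spec hc2
  set W1 : G.Walk a b := C'.takeUntil b hb with hW1def
  set W2' : G.Walk b a := C'.dropUntil b hb with hW2'def
  set W2 : G.Walk b c := W2'.takeUntil c hc2 with hW2def
  set W3 : G.Walk c a := W2'.dropUntil c hc2 with hW3def
  have hn1 : ¬ W1.Nil := Walk.not_nil_of_ne hba.symm
  have hn2' : ¬ W2'.Nil := Walk.not_nil_of_ne hba
  have hn2 : ¬ W2.Nil := Walk.not_nil_of_ne hcb.symm
  have hn3 : ¬ W3.Nil := Walk.not_nil_of_ne hca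
  set l1 := W1.support.dropLast with hl1def
  set l2 := W2.support.dropLast with hl2def
  set l3 := W3.support.dropLast with hl3def
  have hspec2' : W2.append W3 = W2' := hspec2
  have hsplit : C'.support.dropLast = l1 ++ (l2 ++ l3) := by
    conv_lhs => rw [← hspec1]
    rw [dropLast_support_append W1 W2' hn2']
    congr 1
    conv_lhs => rw [← hspec2']
    exact dropLast_support_append W2 W3 hn3
  have hnodup : (l1 ++ (l2 ++ l3)).Nodup := hsplit ▸ dropLast_support_nodup C' hcyc
  have eq1 : l1 = a :: W1.support.tail.dropLast := by
    rw [hl1def]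
    conv_lhs => rw [W1.support_eq_cons]
    exact List.dropLast_cons_of_ne_nil (support_tail_ne_nil W1 hn1)
  have eq2 : l2 = b :: W2.support.tail.dropLast := by
    rw [hl2def]
    conv_lhs => rw [W2.support_eq_cons]
    exact List.dropLast_cons_of_ne_nil (support_tail_ne_nil W2 hn2)
  have eq3 : l3 = c :: W3.support.tail.dropLast := by
    rw [hl3def]
    conv_lhs => rw [W3.support_eq_cons]
    exact List.dropLast_cons_of_ne_nil (support_tail_ne_nil W3 hn3)
  have ha1 : a ∈ l1 := by rw [eq1]; simp
  have hb2 : b ∈ l2 := by rw [eq2]; simp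
  have hc3 : c ∈ l3 := by rw [eq3]; simp
  have hne1 : l1 ≠ [] := by rw [eq1]; simp
  have hne2 : l2 ≠ [] := by rw [eq2]; simp
  have hne3 : l3 ≠ [] := by rw [eq3]; simp
  -- chains
  have hch1 : List.Chain' G.Adj l1 := (Walk.isChain_adj_support W1).prefix (List.dropLast_prefix _)
  have hch2 : List.Chain' G.Adj l2 := (Walk.isChain_adj_support W2).prefix (List.dropLast_prefix _)
  have hch3 : List.Chain' G.Adj l3 := (Walk.isChain_adj_support W3).prefix (List.dropLast_prefix _)
  -- last elements adjacent to next head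
  have hdlne : ∀ {s t : V} (W : G.Walk s t), ¬ W.Nil → W.support.dropLast ≠ [] := by
    intro s t W hn h
    have h2 := List.dropLast_append_getLast W.support_ne_nil
    rw [h] at h2
    have h3 := congrArg List.length h2
    rw [W.length_support] at h3
    simp only [List.length_append, List.length_nil, List.length_cons] at h3
    exact hn (Walk.nil_iff_length_eq.mpr (by omega))
  have hlastadj : ∀ {s t : V} (W : G.Walk s t) (hn : ¬ W.Nil),
      G.Adj (W.support.dropLast.getLast (hdlne W hn)) t := by
    intro s t W hn
    have hW : W.support.dropLast ++ [t] = W.support := by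
      have h2 := List.dropLast_append_getLast W.support_ne_nil
      rwa [W.getLast_support] at h2
    have hch := Walk.isChain_adj_support W
    rw [← hW] at hch
    have h3 := (List.isChain_append.mp hch).2.2
    exact h3 _ (by simp [List.getLast?_eq_getLast (hdlne W hn)]) t rfl
  have hA1 : G.Adj (l1.getLast hne1) b := hlastadj W1 hn1
  have hA2 : G.Adj (l2.getLast hne2) c := hlastadj W2 hn2
  have hA3 : G.Adj (l3.getLast hne3) a := hlastadj W3 hn3
  -- subsets of the cycle
  have hsub1 : ∀ z ∈ l1, z ∈ C'.support := fun z hz =>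
    C'.support_takeUntil_subset hb (List.dropLast_subset _ hz)
  have hsub2 : ∀ z ∈ l2, z ∈ C'.support := fun z hz =>
    C'.support_dropUntil_subset hb (W2'.support_takeUntil_subset hc2 (List.dropLast_subset _ hz))
  have hsub3 : ∀ z ∈ l3, z ∈ C'.support := fun z hz =>
    C'.support_dropUntil_subset hb (W2'.support_dropUntil_subset hc2 (List.dropLast_subset _ hz))
  -- disjointness
  have hd1 := List.disjoint_of_nodup_append hnodup
  have hnodup23 : (l2 ++ l3).Nodup := (List.nodup_append'.mp hnodup).2.1
  have hd23 := List.disjoint_of_nodup_append hnodup23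
  -- apply
  refine four_sets' D hcard N {z | z ∈ l1} {z | z ∈ l2} {z | z ∈ l3}
    ⟨na, hna⟩ ⟨a, ha1⟩ ⟨b, hb2⟩ ⟨c, hc3⟩
    (fun z hz hz1 => hNC z (hsub1 z hz1) hz)
    (fun z hz hz2 => hNC z (hsub2 z hz2) hz)
    (fun z hz hz3 => hNC z (hsub3 z hz3) hz)
    (fun z hz2 hz3 => hd1 hz2 (List.mem_append_left _ hz3))
    (fun z hz2 hz3 => hd1 hz2 (List.mem_append_right _ hz3))
    (fun z hz2 hz3 => hd23 hz2 hz3)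
    hNconn
    (fun u hu v hv => exists_walk_of_chain l1 hch1 u hu v hv)
    (fun u hu v hv => exists_walk_of_chain l2 hch2 u hu v hv)
    (fun u hu v hv => exists_walk_of_chain l3 hch3 u hu v hv)
    ⟨na, hna, a, ha1, haa.symm⟩
    ⟨nb, hnb, b, hb2, hab.symm⟩
    ⟨nc, hnc, c, hc3, hac.symm⟩
    ⟨l1.getLast hne1, List.getLast_mem hne1, b, hb2, hA1⟩
    ⟨a, ha1, l3.getLast hne3, List.getLast_mem hne3, hA3.symm⟩
    ⟨l2.getLast hne2, List.getLast_mem hne2, c, hc3, hA2⟩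

end Aux6
/-- Let `G` be a 2-connected finite simple graph with path-width at most 2 and
let `C` be a longest cycle of `G`. Then every bridge of `C` has exactly two legs. -/
theorem bridge_has_two_legs {V : Type u} [Fintype V] (G : SimpleGraph V)
    (h2 : TwoConnected G) (hpw : pathWidth G ≤ 2) {x : V} (C : G.Walk x x)
    (hC : IsLongestCycle G C) (B : G.Subgraph) (hB : IsBridgeOf G C B) :
    (legs C B).ncard = 2 := by
  classical
  rcases hB with ⟨N, hN, rfl⟩ | ⟨p, q, hpq, hpS, hqS, hne_edge, rfl⟩
  · -- component bridge
    obtain ⟨hNne, hNsub, hNconnI, hNcl⟩ := hN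
    have hlegs : legs C (bridgeFromComp G N) = {z | z ∈ C.support ∧ ∃ y ∈ N, G.Adj z y} := by
      ext z
      constructor
      · rintro ⟨⟨y, hadj, hor⟩, hzs⟩
        refine ⟨hzs, ?_⟩
        rcases hor with hz | hy
        · exact absurd hzs (hNsub hz)
        · exact ⟨y, hy, hadj⟩
      · rintro ⟨hzs, y, hy, hadj⟩
        exact ⟨⟨y, hadj, Or.inr hy⟩, hzs⟩
    rw [hlegs]
    set LS : Set V := {z | z ∈ C.support ∧ ∃ y ∈ N, G.Adj z y} with hLS
    -- walk-connectivity of N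
    have hNwalk : ∀ u ∈ N, ∀ v ∈ N, ∃ p : G.Walk u v, ∀ z ∈ p.support, z ∈ N := by
      intro u hu v hv
      obtain ⟨p⟩ := hNconnI.preconnected ⟨u, hu⟩ ⟨v, hv⟩
      refine ⟨p.map (SimpleGraph.Embedding.induce N).toHom, ?_⟩
      intro z hz
      have hz : z ∈ (p.map (SimpleGraph.Embedding.induce N).toHom).support := hz
      rw [Walk.support_map] at hz
      obtain ⟨⟨z', hz'⟩, -, rfl⟩ := List.mem_map.mp hz
      exact hz'
    have hCcyc := hC.1
    have hlen3 := hCcyc.three_le_length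
    have hCnn : ¬ C.Nil := by
      intro h
      rw [Walk.nil_iff_length_eq.mp h] at hlen3
      omega
    -- two distinct support elements avoiding any given vertex
    have hexists_ne : ∀ u : V, ∃ w, w ∈ C.support ∧ w ≠ u := by
      intro u
      have hnd := hCcyc.support_nodup
      have hlen : C.support.tail.length = C.length := by
        rw [List.length_tail, C.length_support]
        omega
      cases htl : C.support.tail with
      | nil => rw [htl] at hlen; simp at hlen; omega
      | cons w1 t1 =>
        cases t1 with
        | nil => rw [htl] at hlen; simp at hlen; omega
        | cons w2 t2 =>
          rw [htl] at hnd
          have h12 : w1 ≠ w2 := by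
            intro h
            exact (List.nodup_cons.mp hnd).1 (h ▸ List.mem_cons_self)
          by_cases h : w1 = u
          · exact ⟨w2, List.mem_of_mem_tail (by rw [htl]; simp), by rw [← h]; exact h12.symm⟩
          · exact ⟨w1, List.mem_of_mem_tail (by rw [htl]; simp), h⟩
    have hxS : x ∈ C.support := C.start_mem_support
    -- producing legs avoiding any non-N vertex
    have hlegset : ∀ v : V, v ∉ N → ∃ t, t ∈ LS ∧ t ≠ v := by
      intro v hvN
      obtain ⟨w, hwS, hwv⟩ := hexists_ne v
      obtain ⟨n0, hn0⟩ := hNne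
      have hn0c : n0 ∈ ({v}ᶜ : Set V) := by
        simp only [Set.mem_compl_iff, Set.mem_singleton_iff]
        intro h
        exact hvN (h ▸ hn0)
      have hwc : w ∈ ({v}ᶜ : Set V) := by
        simp only [Set.mem_compl_iff, Set.mem_singleton_iff]
        exact hwv
      obtain ⟨pw⟩ := (h2.2 v).preconnected ⟨n0, hn0c⟩ ⟨w, hwc⟩
      set pw' := pw.map (SimpleGraph.Embedding.induce ({v}ᶜ : Set V)).toHom with hpw'
      have hsupp : ∀ z ∈ pw'.support, z ≠ v := by
        intro z hz
        rw [hpw', Walk.support_map] at hz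
        obtain ⟨⟨z', hz'⟩, -, rfl⟩ := List.mem_map.mp hz
        simpa using hz'
      have hwN : w ∉ N := fun h => (hNsub h) hwS
      obtain ⟨s, t, hsN, htN, hst, htsup⟩ := exists_exit pw' hn0 hwN
      have htS : t ∈ C.support := by
        by_contra hns
        exact htN (hNcl s hsN t hns hst)
      exact ⟨t, ⟨htS, ⟨s, hsN, hst.symm⟩⟩, hsupp t htsup⟩
    have hfin : LS.Finite := Set.toFinite _
    obtain ⟨t1, ht1, -⟩ := hlegset x (fun h => (hNsub h) hxS)
    obtain ⟨t2, ht2, ht21⟩ := hlegset t1 (fun h => (hNsub h) ht1.1)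
    have hge2 : 1 < LS.ncard := (Set.one_lt_ncard hfin).mpr ⟨t2, ht2, t1, ht1, ht21⟩
    -- upper bound
    have hle2 : LS.ncard ≤ 2 := by
      by_contra hgt
      push_neg at hgt
      -- a width ≤ 2 path decomposition
      have hSne : Set.Nonempty {w | ∃ D : PathDecomp G, D.width = w} := by
        refine ⟨PathDecomp.width ⟨1, fun _ => Finset.univ, fun v => ⟨0, Finset.mem_univ v⟩,
          fun u w _ => ⟨0, Finset.mem_univ u, Finset.mem_univ w⟩,
          fun i j k _ _ v _ _ => Finset.mem_univ v⟩, _, rfl⟩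
      obtain ⟨D, hD⟩ := Nat.sInf_mem hSne
      have hw2 : D.width ≤ 2 := hD.le.trans hpw
      have hcard : ∀ i, (D.bag i).card ≤ 3 := by
        intro i
        have h1 : (D.bag i).card ≤ Finset.univ.sup (fun i => (D.bag i).card) :=
          Finset.le_sup (f := fun i => (D.bag i).card) (Finset.mem_univ i)
        have h2' : Finset.univ.sup (fun i => (D.bag i).card) - 1 ≤ 2 := hw2
        omega
      -- three distinct legs
      have h3 : 3 ≤ hfin.toFinset.card := by
        rwa [← Set.ncard_eq_toFinset_card LS hfin]
      obtain ⟨T, hTsub, hT3⟩ := Finset.exists_subset_card_eq h3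
      obtain ⟨a, b, c, hab, hac, hbc, rfl⟩ := Finset.card_eq_three.mp hT3
      have haL : a ∈ LS := (Set.Finite.mem_toFinset hfin).mp (hTsub (by simp))
      have hbL : b ∈ LS := (Set.Finite.mem_toFinset hfin).mp (hTsub (by simp))
      have hcL : c ∈ LS := (Set.Finite.mem_toFinset hfin).mp (hTsub (by simp))
      obtain ⟨haS, na, hnaN, hana⟩ := haL
      obtain ⟨hbS, nb, hnbN, hbnb⟩ := hbL
      obtain ⟨hcS, nc, hncN, hcnc⟩ := hcL
      -- rotate cycle at a
      have hcyc' : (C.rotate a haS).IsCycle := hCcyc.rotate haS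
      have hC'nn : ¬ (C.rotate a haS).Nil := by
        intro h
        have := hcyc'.three_le_length
        rw [Walk.nil_iff_length_eq.mp h] at this
        omega
      have hmemiff : ∀ z, z ∈ (C.rotate a haS).support ↔ z ∈ C.support := by
        intro z
        rw [closed_mem_support_tail _ hC'nn, closed_mem_support_tail C hCnn]
        exact (Walk.support_rotate C a haS).mem_iff
      have hb' : b ∈ (C.rotate a haS).support := (hmemiff b).mpr hbS
      have hc' : c ∈ (C.rotate a haS).support := (hmemiff c).mpr hcS
      have hNC' : ∀ z ∈ (C.rotate a haS).support, z ∉ N :=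
        fun z hz hzN => (hNsub hzN) ((hmemiff z).mp hz)
      by_cases hcase : c ∈ ((C.rotate a haS).dropUntil b hb').support
      · exact core D hcard N hNwalk (C.rotate a haS) hcyc' hNC' hb' hab.symm hac.symm hbc.symm
          hcase hnaN hnbN hncN hana hbnb hcnc
      · have hc'' : c ∈ ((C.rotate a haS).takeUntil b hb').support := by
          have hmem : c ∈ (((C.rotate a haS).takeUntil b hb').append
              ((C.rotate a haS).dropUntil b hb')).support := by
            rw [(C.rotate a haS).take_spec hb']
            exact hc'
          rcases (Walk.mem_support_append_iff _ _).mp hmem with h | h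
          · exact h
          · exact absurd h hcase
        have hbdrop : b ∈ ((C.rotate a haS).dropUntil c hc').support := by
          by_contra hbd
          have hbtake : b ∈ ((C.rotate a haS).takeUntil c hc').support := by
            have hmem : b ∈ (((C.rotate a haS).takeUntil c hc').append
                ((C.rotate a haS).dropUntil c hc')).support := by
              rw [(C.rotate a haS).take_spec hc']
              exact hb'
            rcases (Walk.mem_support_append_iff _ _).mp hmem with h | h
            · exact h
            · exact absurd h hbd
          exact hbc (mem_takeUntil_antisymm _ hb' hc' hc'' hbtake)
        exact core D hcard N hNwalk (C.rotate a haS) hcyc' hNC' hc' hac.symm hab.symm hbc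
          hbdrop hnaN hncN hnbN hana hcnc hbnb
    omega
  · -- single edge bridge
    have hset : legs C (G.subgraphOfAdj hpq) = {p, q} := by
      ext z
      constructor
      · rintro ⟨hzv, hzs⟩
        simpa using hzv
      · intro hz
        rcases hz with rfl | rfl
        · exact ⟨by simp, hpS⟩
        · exact ⟨by simp, hqS⟩
    rw [hset]
    exact Set.ncard_pair hpq.ne
end
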